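/- If a concept class H does not have an infinite eluder sequence centered at a target h*, then for every realizable distribution P centered at h* there is a finite constant k = k(P) such that every ERM learner satisfies E[er_P(ĥ_n)] ≤ 2^{-⌊n/k⌋} for all n; i.e., h* is universally learnable by ERM at exponential rate. -/

import Mathlib

open MeasureTheory ENNReal

set_option linter.unusedSectionVars false

namespace NoEluderAux

variable {X : Type*} [MeasurableSpace X]

/-- error of a hypothesis -/
noncomputable def er (P : Measure (X × Bool)) (h : X → Bool) : ℝ≥0∞ :=
  P {q : X × Bool | h q.1 ≠ q.2}

section Defs

variable (q0 : X × Bool) (P : Measure (X × Bool))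

/-- extend a finite tuple to an infinite sequence by a default value -/
def rf (k : ℕ) (t : Fin k → X × Bool) : ℕ → X × Bool :=
  fun m => if h : m < k then t ⟨m, h⟩ else q0

/-- the finite-dimensional trace of a set of sequences -/
def mset (k : ℕ) (A : Set (ℕ → X × Bool)) : Set (Fin k → X × Bool) := {t | rf q0 k t ∈ A}

noncomputable abbrev pin (n : ℕ) : Measure (Fin n → X × Bool) := Measure.pi fun _ => P

noncomputable def nu (k : ℕ) (A : Set (ℕ → X × Bool)) : ℝ≥0∞ := pin P k (mset q0 k A)

/-- `A` depends only on the first `k` coordinates -/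
def supp (k : ℕ) (A : Set (ℕ → X × Bool)) : Prop :=
  ∀ x y : ℕ → X × Bool, (∀ m < k, x m = y m) → x ∈ A → y ∈ A

def glue (i : ℕ) (s x : ℕ → X × Bool) : ℕ → X × Bool :=
  fun m => if m < i then s m else x (m - i)

/-- continuation set: fix the first `i` coordinates to those of `s` -/
def fixP (i : ℕ) (s : ℕ → X × Bool) (A : Set (ℕ → X × Bool)) : Set (ℕ → X × Bool) :=
  {x | glue i s x ∈ A}

def cons0 (ω : X × Bool) (x : ℕ → X × Bool) : ℕ → X × Bool :=
  fun m => match m with | 0 => ω | (m + 1) => x m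

/-- section of a set at a leading coordinate -/
def secAt (A : Set (ℕ → X × Bool)) (ω : X × Bool) : Set (ℕ → X × Bool) :=
  {x | cons0 ω x ∈ A}

end Defs

section Basic

variable (q0 : X × Bool)

lemma rf_lt {k : ℕ} (t : Fin k → X × Bool) {m : ℕ} (h : m < k) :
    rf q0 k t m = t ⟨m, h⟩ := by simp [rf, h]

lemma rf_ge {k : ℕ} (t : Fin k → X × Bool) {m : ℕ} (h : ¬ m < k) :
    rf q0 k t m = q0 := by simp [rf, h]

lemma rf_cons {k : ℕ} (ω : X × Bool) (t : Fin k → X × Bool) :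
    rf q0 (k + 1) (Fin.cons ω t) = cons0 ω (rf q0 k t) := by
  funext m
  match m with
  | 0 => simp [rf, cons0, Fin.cons]
  | (m + 1) =>
    by_cases h : m < k
    · have h' : m + 1 < k + 1 := by omega
      rw [rf_lt q0 _ h']
      have he : (⟨m + 1, h'⟩ : Fin (k + 1)) = Fin.succ ⟨m, h⟩ := rfl
      rw [he, Fin.cons_succ]
      simp [cons0, rf_lt q0 _ h]
    · have h' : ¬ m + 1 < k + 1 := by omega
      rw [rf_ge q0 _ h']
      simp [cons0, rf_ge q0 _ h]

lemma glue_zero (s x : ℕ → X × Bool) : glue 0 s x = x := by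
  funext m; simp [glue]

lemma glue_lt {i : ℕ} (s x : ℕ → X × Bool) {m : ℕ} (h : m < i) : glue i s x m = s m := by
  simp [glue, h]

lemma glue_ge {i : ℕ} (s x : ℕ → X × Bool) {m : ℕ} (h : ¬ m < i) : glue i s x m = x (m - i) := by
  simp [glue, h]

lemma glue_cons0 (i : ℕ) (s x : ℕ → X × Bool) (ω : X × Bool) :
    glue i s (cons0 ω x) = glue (i + 1) (Function.update s i ω) x := by
  funext m
  rcases lt_trichotomy m i with h | h | h
  · rw [glue_lt _ _ h, glue_lt _ _ (by omega)]
    rw [Function.update_of_ne (by omega)]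
  · subst h
    rw [glue_ge _ _ (by omega), glue_lt _ _ (by omega), Function.update_self]
    simp [cons0]
  · obtain ⟨d, rfl⟩ : ∃ d, m = i + d + 1 := ⟨m - i - 1, by omega⟩
    rw [glue_ge _ _ (by omega), glue_ge _ _ (by omega)]
    have h1 : i + d + 1 - i = d + 1 := by omega
    have h2 : i + d + 1 - (i + 1) = d := by omega
    rw [h1, h2]; simp [cons0]

lemma cons0_glue (i : ℕ) (s x : ℕ → X × Bool) (ω : X × Bool) :
    cons0 ω (glue i s x) = glue (i + 1) (cons0 ω s) x := by
  funext m
  match m with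
  | 0 => rw [glue_lt _ _ (by omega)]; simp [cons0]
  | (m + 1) =>
    by_cases h : m < i
    · rw [glue_lt _ _ (by omega)]
      simp only [cons0, glue_lt _ _ h]
    · rw [glue_ge _ _ (by omega)]
      have h2 : m + 1 - (i + 1) = m - i := by omega
      rw [h2]
      simp only [cons0, glue_ge _ _ h]

lemma fixP_zero (s : ℕ → X × Bool) (A : Set (ℕ → X × Bool)) : fixP 0 s A = A := by
  ext x; simp [fixP, glue_zero]

lemma secAt_fixP (i : ℕ) (s : ℕ → X × Bool) (A : Set (ℕ → X × Bool)) (ω : X × Bool) :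
    secAt (fixP i s A) ω = fixP (i + 1) (Function.update s i ω) A := by
  ext x; simp only [secAt, fixP, Set.mem_setOf_eq, glue_cons0]

lemma fixP_cons0 (i : ℕ) (s : ℕ → X × Bool) (A : Set (ℕ → X × Bool)) (ω : X × Bool) :
    fixP i s (secAt A ω) = fixP (i + 1) (cons0 ω s) A := by
  ext x; simp only [fixP, secAt, Set.mem_setOf_eq, cons0_glue]

lemma fixP_congr {i : ℕ} {s s' : ℕ → X × Bool} (h : ∀ m < i, s m = s' m)
    (A : Set (ℕ → X × Bool)) : fixP i s A = fixP i s' A := by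
  ext x
  have : glue i s x = glue i s' x := by
    funext m
    by_cases hm : m < i
    · rw [glue_lt _ _ hm, glue_lt _ _ hm, h m hm]
    · rw [glue_ge _ _ hm, glue_ge _ _ hm]
  simp [fixP, this]

lemma supp_mono {l k : ℕ} (h : l ≤ k) {A : Set (ℕ → X × Bool)} (hs : supp l A) : supp k A :=
  fun x y hxy hx => hs x y (fun m hm => hxy m (lt_of_lt_of_le hm h)) hx

lemma supp_fixP {i j : ℕ} {A : Set (ℕ → X × Bool)} (hs : supp (i + j) A) (s : ℕ → X × Bool) :
    supp j (fixP i s A) := by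
  intro x y hxy hx
  refine hs _ _ ?_ hx
  intro m hm
  by_cases h : m < i
  · rw [glue_lt _ _ h, glue_lt _ _ h]
  · rw [glue_ge _ _ h, glue_ge _ _ h, hxy _ (by omega)]

lemma supp_secAt {k : ℕ} {A : Set (ℕ → X × Bool)} (hs : supp (k + 1) A) (ω : X × Bool) :
    supp k (secAt A ω) := by
  intro x y hxy hx
  refine hs _ _ ?_ hx
  intro m hm
  match m with
  | 0 => rfl
  | (m + 1) => simpa [cons0] using hxy m (by omega)

end Basic

section Meas

variable (q0 : X × Bool) (P : Measure (X × Bool)) [IsProbabilityMeasure P]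

lemma finCons_apply {j : ℕ} (ω : X × Bool) (t : Fin j → X × Bool) (m : Fin (j + 1)) :
    Fin.cons (α := fun _ => X × Bool) ω t m
      = if h : (m : ℕ) = 0 then ω else t ⟨(m : ℕ) - 1, by omega⟩ := by
  obtain ⟨mv, hm⟩ := m
  match mv with
  | 0 =>
    have he : (⟨0, hm⟩ : Fin (j + 1)) = 0 := rfl
    rw [he, Fin.cons_zero]
    simp
  | (mv + 1) =>
    have he : (⟨mv + 1, hm⟩ : Fin (j + 1)) = Fin.succ ⟨mv, by omega⟩ := rfl
    rw [he, Fin.cons_succ]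
    simp

lemma measurable_finCons {j : ℕ} :
    Measurable (fun p : (X × Bool) × (Fin j → X × Bool) =>
      Fin.cons (α := fun _ => X × Bool) p.1 p.2) := by
  rw [measurable_pi_iff]
  intro m
  simp only [finCons_apply]
  by_cases h : (m : ℕ) = 0
  · simp only [dif_pos h]
    exact measurable_fst
  · simp only [dif_neg h]
    exact (measurable_pi_apply _).comp measurable_snd

/-- gluing two finite tuples -/
def psiMap (i j : ℕ) (p : (Fin i → X × Bool) × (Fin j → X × Bool)) : Fin (i + j) → X × Bool :=
  fun m => if h : (m : ℕ) < i then p.1 ⟨m, h⟩ else p.2 ⟨(m : ℕ) - i, by omega⟩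

lemma measurable_psiMap (i j : ℕ) : Measurable (psiMap (X := X) i j) := by
  rw [measurable_pi_iff]
  intro m
  unfold psiMap
  by_cases h : (m : ℕ) < i
  · simp only [dif_pos h]
    exact (measurable_pi_apply _).comp measurable_fst
  · simp only [dif_neg h]
    exact (measurable_pi_apply _).comp measurable_snd

lemma rf_psiMap (i j : ℕ) (p : (Fin i → X × Bool) × (Fin j → X × Bool)) :
    rf q0 (i + j) (psiMap i j p) = glue i (rf q0 i p.1) (rf q0 j p.2) := by
  funext m
  by_cases h1 : m < i
  · rw [rf_lt q0 _ (by omega), glue_lt _ _ h1, rf_lt q0 _ h1]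
    simp [psiMap, h1]
  · by_cases h2 : m < i + j
    · rw [rf_lt q0 _ h2, glue_ge _ _ h1, rf_lt q0 _ (by omega)]
      simp [psiMap, h1]
    · rw [rf_ge q0 _ h2, glue_ge _ _ h1, rf_ge q0 _ (by omega)]

/-- gluing a fixed sequence with a finite tuple -/
def phi2Map (i j : ℕ) (s : ℕ → X × Bool) (t : Fin j → X × Bool) : Fin (i + j) → X × Bool :=
  fun m => if h : (m : ℕ) < i then s m else t ⟨(m : ℕ) - i, by omega⟩

lemma measurable_phi2Map (i j : ℕ) (s : ℕ → X × Bool) : Measurable (phi2Map i j s) := by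
  rw [measurable_pi_iff]
  intro m
  unfold phi2Map
  by_cases h : (m : ℕ) < i
  · simp only [dif_pos h]; exact measurable_const
  · simp only [dif_neg h]; exact measurable_pi_apply _

lemma rf_phi2Map (i j : ℕ) (s : ℕ → X × Bool) (t : Fin j → X × Bool) :
    rf q0 (i + j) (phi2Map i j s t) = glue i s (rf q0 j t) := by
  funext m
  by_cases h1 : m < i
  · rw [rf_lt q0 _ (by omega), glue_lt _ _ h1]
    simp [phi2Map, h1]
  · by_cases h2 : m < i + j
    · rw [rf_lt q0 _ h2, glue_ge _ _ h1, rf_lt q0 _ (by omega)]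
      simp [phi2Map, h1]
    · rw [rf_ge q0 _ h2, glue_ge _ _ h1, rf_ge q0 _ (by omega)]

lemma mset_fixP_eq (i j : ℕ) (s : ℕ → X × Bool) (A : Set (ℕ → X × Bool)) :
    mset q0 j (fixP i s A) = phi2Map i j s ⁻¹' mset q0 (i + j) A := by
  ext t
  simp only [mset, fixP, Set.mem_setOf_eq, Set.mem_preimage, rf_phi2Map]

lemma measurableSet_mset_fixP {i j : ℕ} {A : Set (ℕ → X × Bool)}
    (hm : MeasurableSet (mset q0 (i + j) A)) (s : ℕ → X × Bool) :
    MeasurableSet (mset q0 j (fixP i s A)) := by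
  rw [mset_fixP_eq]
  exact hm.preimage (measurable_phi2Map i j s)

lemma measurable_nu_fix {i j : ℕ} {A : Set (ℕ → X × Bool)}
    (hm : MeasurableSet (mset q0 (i + j) A)) :
    Measurable (fun u : Fin i → X × Bool => nu q0 P j (fixP i (rf q0 i u) A)) := by
  have hW : MeasurableSet (psiMap i j ⁻¹' mset q0 (i + j) A) :=
    hm.preimage (measurable_psiMap i j)
  have key : ∀ u : Fin i → X × Bool,
      Prod.mk u ⁻¹' (psiMap i j ⁻¹' mset q0 (i + j) A) = mset q0 j (fixP i (rf q0 i u) A) := by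
    intro u
    ext t
    simp only [Set.mem_preimage, mset, fixP, Set.mem_setOf_eq, rf_psiMap]
  have hmm := measurable_measure_prodMk_left (ν := pin P j) hW
  simp only [nu]
  simpa only [key] using hmm

/-- the trace of a set supported on fewer coordinates -/
lemma mset_of_le {l k : ℕ} (h : l ≤ k) {A : Set (ℕ → X × Bool)} (hs : supp l A) :
    mset q0 k A =
      (fun t : Fin k → X × Bool => fun m : Fin l => t ⟨(m : ℕ), lt_of_lt_of_le m.2 h⟩) ⁻¹'
        mset q0 l A := by
  ext t
  simp only [mset, Set.mem_setOf_eq, Set.mem_preimage]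
  constructor
  · intro ht
    refine hs _ _ ?_ ht
    intro m hm
    rw [rf_lt q0 _ (lt_of_lt_of_le hm h), rf_lt q0 _ hm]
  · intro ht
    refine hs _ _ ?_ ht
    intro m hm
    rw [rf_lt q0 _ hm, rf_lt q0 _ (lt_of_lt_of_le hm h)]

lemma measurableSet_mset_of_le {l k : ℕ} (h : l ≤ k) {A : Set (ℕ → X × Bool)} (hs : supp l A)
    (hm : MeasurableSet (mset q0 l A)) : MeasurableSet (mset q0 k A) := by
  rw [mset_of_le q0 h hs]
  exact hm.preimage (by
    rw [measurable_pi_iff]; intro m; exact measurable_pi_apply _)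

lemma nu_succ_proj {k : ℕ} {A : Set (ℕ → X × Bool)} (hs : supp k A)
    (hm : MeasurableSet (mset q0 k A)) : nu q0 P (k + 1) A = nu q0 P k A := by
  classical
  have hset : mset q0 (k + 1) A =
      (fun t : Fin (k + 1) → X × Bool => fun m : Fin k => t m.castSucc) ⁻¹' mset q0 k A := by
    ext t
    simp only [mset, Set.mem_setOf_eq, Set.mem_preimage]
    constructor
    · intro ht
      refine hs _ _ ?_ ht
      intro m hm'
      rw [rf_lt q0 _ (by omega), rf_lt q0 _ hm']
      rfl
    · intro ht
      refine hs _ _ ?_ ht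
      intro m hm'
      rw [rf_lt q0 _ hm', rf_lt q0 _ (by omega)]
      rfl
  set e := MeasurableEquiv.piFinSuccAbove (fun _ : Fin (k + 1) => X × Bool) (Fin.last k) with he
  have mp := measurePreserving_piFinSuccAbove (fun _ : Fin (k + 1) => P) (Fin.last k)
  have hsec : ∀ t : Fin (k + 1) → X × Bool, (e t).2 = fun m : Fin k => t m.castSucc := by
    intro t
    funext m
    show t ((Fin.last k).succAbove m) = t m.castSucc
    rw [Fin.succAbove_last_apply]
  have hpre : (fun t : Fin (k + 1) → X × Bool => fun m : Fin k => t m.castSucc) ⁻¹'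
      mset q0 k A = e ⁻¹' (Set.univ ×ˢ mset q0 k A) := by
    ext t
    simp only [Set.mem_preimage, Set.mem_prod, Set.mem_univ, true_and, hsec]
  rw [nu, nu, hset, hpre]
  rw [show (pin P (k + 1)) (e ⁻¹' (Set.univ ×ˢ mset q0 k A))
      = (P.prod (Measure.pi fun _ : Fin k => P)) (Set.univ ×ˢ mset q0 k A) from
    mp.measure_preimage (MeasurableSet.univ.prod hm).nullMeasurableSet]
  rw [Measure.prod_prod, measure_univ, one_mul]

lemma nu_of_le {l k : ℕ} (h : l ≤ k) {A : Set (ℕ → X × Bool)} (hs : supp l A)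
    (hm : MeasurableSet (mset q0 l A)) : nu q0 P k A = nu q0 P l A := by
  induction k, h using Nat.le_induction with
  | base => rfl
  | succ k hk ih =>
    rw [← ih]
    exact nu_succ_proj q0 P (supp_mono hk hs) (measurableSet_mset_of_le q0 hk hs hm)

lemma mset_secAt_eq {j : ℕ} (A : Set (ℕ → X × Bool)) (ω : X × Bool) :
    mset q0 j (secAt A ω) =
      Prod.mk ω ⁻¹' ((fun p : (X × Bool) × (Fin j → X × Bool) => Fin.cons p.1 p.2) ⁻¹'
        mset q0 (j + 1) A) := by
  ext t
  simp only [mset, secAt, Set.mem_setOf_eq, Set.mem_preimage, rf_cons]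

lemma measurableSet_mset_secAt {j : ℕ} {A : Set (ℕ → X × Bool)}
    (hm : MeasurableSet (mset q0 (j + 1) A)) (ω : X × Bool) :
    MeasurableSet (mset q0 j (secAt A ω)) := by
  rw [mset_secAt_eq]
  exact (hm.preimage measurable_finCons).preimage measurable_prodMk_left

lemma nu_succ_sec {j : ℕ} {A : Set (ℕ → X × Bool)} (hm : MeasurableSet (mset q0 (j + 1) A)) :
    nu q0 P (j + 1) A = ∫⁻ ω, nu q0 P j (secAt A ω) ∂P := by
  set W := (fun p : (X × Bool) × (Fin j → X × Bool) => Fin.cons p.1 p.2) ⁻¹'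
    mset q0 (j + 1) A with hWdef
  have hW : MeasurableSet W := hm.preimage measurable_finCons
  set e := MeasurableEquiv.piFinSuccAbove (fun _ : Fin (j + 1) => X × Bool) 0 with he
  have mp := measurePreserving_piFinSuccAbove (fun _ : Fin (j + 1) => P) 0
  have hpre : mset q0 (j + 1) A = e ⁻¹' W := by
    ext t
    have het : e t = (t 0, Fin.tail t) := rfl
    simp only [Set.mem_preimage, het, hWdef]
    rw [Fin.cons_self_tail]
  rw [nu, hpre]
  rw [show (pin P (j + 1)) (e ⁻¹' W) = (P.prod (Measure.pi fun _ : Fin j => P)) W from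
    mp.measure_preimage hW.nullMeasurableSet]
  rw [Measure.prod_apply hW]
  refine lintegral_congr fun ω => ?_
  rw [nu, mset_secAt_eq, ← hWdef]

lemma lintegral_pin_succ {i : ℕ} (F : (Fin (i + 1) → X × Bool) → ℝ≥0∞) (hF : Measurable F) :
    ∫⁻ v, F v ∂pin P (i + 1) = ∫⁻ ω, ∫⁻ u, F (Fin.cons ω u) ∂pin P i ∂P := by
  set e := MeasurableEquiv.piFinSuccAbove (fun _ : Fin (i + 1) => X × Bool) 0 with he
  have mp := measurePreserving_piFinSuccAbove (fun _ : Fin (i + 1) => P) 0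
  have hFs : Measurable (F ∘ e.symm) := hF.comp e.symm.measurable
  have h1 := mp.lintegral_comp hFs
  have h2 : ∀ v, (F ∘ e.symm) (e v) = F v := by
    intro v; simp
  simp only [Function.comp_apply, MeasurableEquiv.symm_apply_apply] at h1
  have h3 : ∫⁻ v, F v ∂pin P (i + 1)
      = ∫⁻ b, (F ∘ e.symm) b ∂P.prod (Measure.pi fun _ : Fin i => P) :=
        (lintegral_congr fun v => (congrArg F (e.symm_apply_apply v)).symm).trans h1
  rw [h3, lintegral_prod _ hFs.aemeasurable]
  refine lintegral_congr fun ω => lintegral_congr fun u => ?_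
  show F (e.symm (ω, u)) = F (Fin.cons ω u)
  congr 1
  show (Fin.insertNthEquiv (fun _ : Fin (i + 1) => X × Bool) 0) (ω, u) = Fin.cons ω u
  rw [Fin.insertNthEquiv_zero]
  rfl

lemma nu_iter (i : ℕ) {j : ℕ} {A : Set (ℕ → X × Bool)} (hs : supp (i + j) A)
    (hm : MeasurableSet (mset q0 (i + j) A)) :
    nu q0 P (i + j) A = ∫⁻ u : Fin i → X × Bool, nu q0 P j (fixP i (rf q0 i u) A) ∂pin P i := by
  induction i generalizing A with
  | zero =>
    simp only [Nat.zero_add] at *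
    have : ∀ u : Fin 0 → X × Bool, nu q0 P j (fixP 0 (rf q0 0 u) A) = nu q0 P j A := by
      intro u; rw [fixP_zero]
    simp only [this]
    rw [lintegral_const, measure_univ, mul_one]
  | succ i ih =>
    have hk : i + 1 + j = i + j + 1 := by omega
    have hm' : MeasurableSet (mset q0 (i + j + 1) A) := by rw [← hk]; exact hm
    have hs' : supp (i + j + 1) A := by rw [← hk]; exact hs
    have hG : Measurable (fun v : Fin (i + 1) → X × Bool =>
        nu q0 P j (fixP (i + 1) (rf q0 (i + 1) v) A)) := measurable_nu_fix q0 P hm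
    rw [lintegral_pin_succ P _ hG]
    rw [show i + 1 + j = i + j + 1 from hk]
    rw [nu_succ_sec q0 P hm']
    refine lintegral_congr fun ω => ?_
    rw [ih (supp_secAt hs' ω) (measurableSet_mset_secAt q0 hm' ω)]
    refine lintegral_congr fun u => ?_
    rw [fixP_cons0, ← rf_cons]

end Meas

section Lam

variable (q0 : X × Bool) (P : Measure (X × Bool)) [IsProbabilityMeasure P]
variable (H : Set (X → Bool))

/-- sequences whose first `k` coordinates are consistent with some hypothesis of positive error -/
def Bhat (k : ℕ) : Set (ℕ → X × Bool) :=
  {x | ∃ h ∈ H, (∀ m < k, h (x m).1 = (x m).2) ∧ 0 < er P h}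

variable (T : ℕ → Set (ℕ → X × Bool))

noncomputable def lam (i : ℕ) (s : ℕ → X × Bool) : ℝ≥0∞ :=
  ⨅ j, nu q0 P j (fixP i s (T (i + j)))

lemma mset_mono {k : ℕ} {A B : Set (ℕ → X × Bool)} (h : A ⊆ B) :
    mset q0 k A ⊆ mset q0 k B := fun t ht => h ht

lemma fixP_mono {i : ℕ} {s : ℕ → X × Bool} {A B : Set (ℕ → X × Bool)} (h : A ⊆ B) :
    fixP i s A ⊆ fixP i s B := fun x hx => h hx

lemma nu_fix_anti (hTm : ∀ k, MeasurableSet (mset q0 k (T k))) (hTs : ∀ k, supp k (T k))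
    (hTd : ∀ k, T (k + 1) ⊆ T k) (i : ℕ) (s : ℕ → X × Bool) :
    Antitone fun j => nu q0 P j (fixP i s (T (i + j))) := by
  apply antitone_nat_of_succ_le
  intro j
  have h1 : nu q0 P (j + 1) (fixP i s (T (i + (j + 1))))
      ≤ nu q0 P (j + 1) (fixP i s (T (i + j))) :=
    measure_mono (mset_mono q0 (fixP_mono (hTd (i + j))))
  have h2 : nu q0 P (j + 1) (fixP i s (T (i + j))) = nu q0 P j (fixP i s (T (i + j))) :=
    nu_succ_proj q0 P (supp_fixP (hTs (i + j)) s)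
      (measurableSet_mset_fixP q0 (hTm (i + j)) s)
  exact le_trans h1 (le_of_eq h2)

lemma lam_le_one (i : ℕ) (s : ℕ → X × Bool) : lam q0 P T i s ≤ 1 :=
  le_trans (iInf_le _ 0) prob_le_one

lemma measurable_nu_secAt {j : ℕ} {B : Set (ℕ → X × Bool)}
    (hm : MeasurableSet (mset q0 (j + 1) B)) :
    Measurable fun ω => nu q0 P j (secAt B ω) := by
  have hW : MeasurableSet ((fun p : (X × Bool) × (Fin j → X × Bool) => Fin.cons p.1 p.2) ⁻¹'
      mset q0 (j + 1) B) := hm.preimage measurable_finCons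
  have hmm := measurable_measure_prodMk_left (ν := pin P j) hW
  simp only [nu]
  simpa only [← mset_secAt_eq] using hmm

lemma measurable_nu_upd (hTm : ∀ k, MeasurableSet (mset q0 k (T k))) (i j : ℕ)
    (s : ℕ → X × Bool) :
    Measurable fun ω => nu q0 P j (fixP (i + 1) (Function.update s i ω) (T (i + 1 + j))) := by
  have key : ∀ ω : X × Bool, fixP (i + 1) (Function.update s i ω) (T (i + 1 + j))
      = secAt (fixP i s (T (i + 1 + j))) ω := fun ω => (secAt_fixP i s _ ω).symm
  simp only [key]
  apply measurable_nu_secAt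
  have h2 : MeasurableSet (mset q0 (i + (j + 1)) (T (i + 1 + j))) := by
    have he : i + (j + 1) = i + 1 + j := by omega
    rw [he]
    exact hTm (i + 1 + j)
  exact measurableSet_mset_fixP q0 h2 s

lemma measurable_lam_upd (hTm : ∀ k, MeasurableSet (mset q0 k (T k))) (i : ℕ)
    (s : ℕ → X × Bool) :
    Measurable fun ω => lam q0 P T (i + 1) (Function.update s i ω) := by
  simp only [lam]
  exact Measurable.iInf fun j => measurable_nu_upd q0 P T hTm i j s

lemma lam_step (hTm : ∀ k, MeasurableSet (mset q0 k (T k))) (hTs : ∀ k, supp k (T k))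
    (hTd : ∀ k, T (k + 1) ⊆ T k) (i : ℕ) (s : ℕ → X × Bool) :
    lam q0 P T i s = ∫⁻ ω, lam q0 P T (i + 1) (Function.update s i ω) ∂P := by
  have anti := nu_fix_anti q0 P T hTm hTs hTd i s
  have hshift : lam q0 P T i s = ⨅ j, nu q0 P (j + 1) (fixP i s (T (i + (j + 1)))) := by
    apply le_antisymm
    · exact le_iInf fun j => iInf_le _ (j + 1)
    · exact le_iInf fun j => iInf_le_of_le j (anti (Nat.le_succ j))
  rw [hshift]
  have hF1 : ∀ j, nu q0 P (j + 1) (fixP i s (T (i + (j + 1))))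
      = ∫⁻ ω, nu q0 P j (fixP (i + 1) (Function.update s i ω) (T (i + 1 + j))) ∂P := by
    intro j
    have hmB : MeasurableSet (mset q0 (j + 1) (fixP i s (T (i + (j + 1))))) :=
      measurableSet_mset_fixP q0 (hTm (i + (j + 1))) s
    rw [nu_succ_sec q0 P hmB]
    refine lintegral_congr fun ω => ?_
    rw [secAt_fixP]
    have he : i + (j + 1) = i + 1 + j := by omega
    rw [he]
  simp only [hF1]
  have hmeas : ∀ j, Measurable fun ω =>
      nu q0 P j (fixP (i + 1) (Function.update s i ω) (T (i + 1 + j))) :=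
    fun j => measurable_nu_upd q0 P T hTm i j s
  have hanti : Antitone fun j => fun ω =>
      nu q0 P j (fixP (i + 1) (Function.update s i ω) (T (i + 1 + j))) :=
    fun j1 j2 h ω => nu_fix_anti q0 P T hTm hTs hTd (i + 1) (Function.update s i ω) h
  have hfin : (∫⁻ ω, nu q0 P 0 (fixP (i + 1) (Function.update s i ω) (T (i + 1 + 0))) ∂P)
      ≠ ⊤ := by
    refine ne_top_of_le_ne_top (by simp : (1 : ℝ≥0∞) ≠ ⊤) ?_
    calc ∫⁻ ω, nu q0 P 0 (fixP (i + 1) (Function.update s i ω) (T (i + 1 + 0))) ∂P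
        ≤ ∫⁻ _, 1 ∂P := lintegral_mono fun ω => prob_le_one
      _ = 1 := by rw [lintegral_one, measure_univ]
  rw [← lintegral_iInf hmeas hanti hfin]
  exact lintegral_congr fun ω => rfl

lemma lam_pos_bad (hTB : ∀ k, T k ⊆ Bhat P H k) {i : ℕ} {s : ℕ → X × Bool}
    (hpos : 0 < lam q0 P T i s) :
    ∃ h ∈ H, (∀ m < i, h (s m).1 = (s m).2) ∧ 0 < er P h := by
  have h0 : 0 < nu q0 P 0 (fixP i s (T (i + 0))) := lt_of_lt_of_le hpos (iInf_le _ 0)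
  have hne : (mset q0 0 (fixP i s (T (i + 0)))).Nonempty := by
    by_contra hni
    rw [Set.not_nonempty_iff_eq_empty] at hni
    rw [nu, hni, measure_empty] at h0
    exact lt_irrefl _ h0
  obtain ⟨t, ht⟩ := hne
  have hmem : glue i s (rf q0 0 t) ∈ T (i + 0) := ht
  obtain ⟨h, hH, hcons, her⟩ := hTB (i + 0) hmem
  refine ⟨h, hH, fun m hm => ?_, her⟩
  have h2 := hcons m (by omega)
  rwa [glue_lt _ _ hm] at h2

end Lam

/-- reachable prefixes: extensions of `s0` by points in `C` -/
inductive Reach (i0 : ℕ) (s0 : ℕ → X × Bool) (C : Set (X × Bool)) : ℕ → (ℕ → X × Bool) → Prop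
  | zero : Reach i0 s0 C 0 s0
  | succ {r : ℕ} {s' : ℕ → X × Bool} {ω : X × Bool} :
      Reach i0 s0 C r s' → ω ∈ C → Reach i0 s0 C (r + 1) (Function.update s' (i0 + r) ω)

lemma Reach.agree {i0 : ℕ} {s0 : ℕ → X × Bool} {C : Set (X × Bool)} {r : ℕ}
    {s' : ℕ → X × Bool} (hr : Reach i0 s0 C r s') : ∀ m < i0, s' m = s0 m := by
  induction hr with
  | zero => exact fun m _ => rfl
  | succ hr' hC ih =>
    intro m hm
    rw [Function.update_of_ne (by omega)]
    exact ih m hm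

section StepSec

variable (q0 : X × Bool) (P : Measure (X × Bool)) [IsProbabilityMeasure P]
variable (H : Set (X → Bool)) (hstar : X → Bool)
variable (T : ℕ → Set (ℕ → X × Bool))

lemma Reach.consistent {i0 : ℕ} {s0 : ℕ → X × Bool}
    {r : ℕ} {s' : ℕ → X × Bool}
    (hr : Reach i0 s0 {q : X × Bool | q.2 = hstar q.1 ∧
      ∀ g ∈ H, (∀ m < i0, g (s0 m).1 = (s0 m).2) → g q.1 = q.2} r s')
    {g : X → Bool} (hg : g ∈ H) (hgc : ∀ m < i0, g (s0 m).1 = (s0 m).2) :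
    ∀ m < i0 + r, g (s' m).1 = (s' m).2 := by
  induction hr with
  | zero => intro m hm; exact hgc m (by omega)
  | @succ r s'' ω hr' hC ih =>
    intro m hm
    by_cases hmi : m = i0 + r
    · subst hmi
      rw [Function.update_self]
      exact hC.2 g hg hgc
    · rw [Function.update_of_ne hmi]
      exact ih m (by omega)

/-- Key step: from a prefix with positive `lam` we can reach an eluding extension with
positive `lam`. -/
lemma step_lemma (hTm : ∀ k, MeasurableSet (mset q0 k (T k))) (hTs : ∀ k, supp k (T k))
    (hTd : ∀ k, T (k + 1) ⊆ T k) (hTB : ∀ k, T k ⊆ Bhat P H k)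
    (hN : P {q : X × Bool | ¬ q.2 = hstar q.1} = 0)
    (i0 : ℕ) (s0 : ℕ → X × Bool) (h0 : 0 < lam q0 P T i0 s0) :
    ∃ (i' : ℕ) (s' : ℕ → X × Bool), i0 < i' ∧ (∀ m < i0, s' m = s0 m) ∧
      0 < lam q0 P T i' s' ∧ (s' (i' - 1)).2 = hstar ((s' (i' - 1)).1) ∧
      ∃ h ∈ H, (∀ m < i' - 1, h (s' m).1 = (s' m).2) ∧ h (s' (i' - 1)).1 ≠ (s' (i' - 1)).2 := by
  classical
  obtain ⟨hb, hbH, hbcons, hber⟩ := lam_pos_bad q0 P H T hTB h0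
  set C : Set (X × Bool) := {q : X × Bool | q.2 = hstar q.1 ∧
    ∀ g ∈ H, (∀ m < i0, g (s0 m).1 = (s0 m).2) → g q.1 = q.2} with hCdef
  by_contra hcon
  push_neg at hcon
  -- the supremum of lam over reachable prefixes
  set β : ℝ≥0∞ := ⨆ p : {p : ℕ × (ℕ → X × Bool) // Reach i0 s0 C p.1 p.2},
    lam q0 P T (i0 + p.1.1) p.1.2 with hβdef
  have hβ1 : β ≤ 1 := iSup_le fun p => lam_le_one q0 P T _ _
  set N : Set (X × Bool) := MeasureTheory.toMeasurable P {q : X × Bool | ¬ q.2 = hstar q.1}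
    with hNdef
  have hNmeas : MeasurableSet N := measurableSet_toMeasurable _ _
  have hN0 : P N = 0 := by rw [hNdef, measure_toMeasurable]; exact hN
  -- key estimate on every reachable prefix
  have hkey : ∀ r s', Reach i0 s0 C r s' →
      lam q0 P T (i0 + r) s' ≤ (1 - er P hb) * β := by
    intro r s' hr
    rw [lam_step q0 P T hTm hTs hTd (i0 + r) s']
    set g : (X × Bool) → ℝ≥0∞ := fun ω => lam q0 P T (i0 + r + 1) (Function.update s' (i0 + r) ω)
      with hgdef
    have hgmeas : Measurable g := measurable_lam_upd q0 P T hTm (i0 + r) s'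
    set U : Set (X × Bool) := {ω | 0 < g ω} \ N with hUdef
    have hUmeas : MeasurableSet U :=
      (measurableSet_lt measurable_const hgmeas).diff hNmeas
    -- any point of U is non-eluding and correct, hence in C
    have hUC : U ⊆ C := by
      intro ω hω
      obtain ⟨hgω, hωN⟩ := hω
      have hωcor : ω.2 = hstar ω.1 := by
        by_contra hbad
        exact hωN (subset_toMeasurable _ _ hbad)
      refine ⟨hωcor, ?_⟩
      intro g' hg' hg'c
      by_contra hwrong
      have hidx : i0 + r + 1 - 1 = i0 + r := by omega
      have hAll := hcon (i0 + r + 1) (Function.update s' (i0 + r) ω) (by omega)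
        (fun m hm => by
          rw [Function.update_of_ne (by omega)]
          exact hr.agree m hm)
        hgω
        (by
          rw [hidx, Function.update_self]
          exact hωcor)
      have hres := hAll g' hg' (fun m hm => by
        rw [hidx] at hm
        rw [Function.update_of_ne (by omega)]
        exact Reach.consistent H hstar hr hg' hg'c m hm)
      rw [hidx, Function.update_self] at hres
      exact hwrong hres
    -- points of U stay reachable, so g is bounded by β there
    have hUβ : ∀ ω ∈ U, g ω ≤ β := by
      intro ω hω
      have hreach : Reach i0 s0 C (r + 1) (Function.update s' (i0 + r) ω) :=
        Reach.succ hr (hUC hω)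
      have := le_iSup (fun p : {p : ℕ × (ℕ → X × Bool) // Reach i0 s0 C p.1 p.2} =>
        lam q0 P T (i0 + p.1.1) p.1.2) ⟨(r + 1, Function.update s' (i0 + r) ω), hreach⟩
      exact this
    -- pointwise bound
    have hgle : g ≤ fun ω => N.indicator (fun _ => 1) ω + U.indicator (fun _ => β) ω := by
      intro ω
      show g ω ≤ N.indicator (fun _ => 1) ω + U.indicator (fun _ => β) ω
      by_cases hωN : ω ∈ N
      · calc g ω ≤ 1 := le_trans (lam_le_one q0 P T _ _) (le_refl 1)
          _ ≤ _ := by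
            rw [Set.indicator_of_mem hωN]
            exact le_add_right (le_refl 1)
      · by_cases hgω : 0 < g ω
        · have hωU : ω ∈ U := ⟨hgω, hωN⟩
          calc g ω ≤ β := hUβ ω hωU
            _ ≤ _ := by
              rw [Set.indicator_of_mem hωU]
              exact le_add_left (le_refl β)
        · have hg0 : g ω = 0 := le_antisymm (le_of_not_gt fun hc => hgω hc) (zero_le)
          rw [hg0]
          exact zero_le
    -- integrate the pointwise bound
    have hPU : P U ≤ 1 - er P hb := by
      have hdisj : U ⊆ {q : X × Bool | hb q.1 = q.2} := fun ω hω => (hUC hω).2 hb hbH hbcons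
      have hsub : {q : X × Bool | hb q.1 ≠ q.2} ⊆ Uᶜ := fun q hq hqU => hq (hdisj hqU)
      have h1 : er P hb ≤ P Uᶜ := measure_mono hsub
      have h2 : P Uᶜ = 1 - P U := by
        rw [measure_compl hUmeas (measure_ne_top P U), measure_univ]
      have h3 : P U + er P hb ≤ 1 := by
        rw [h2] at h1
        calc P U + er P hb ≤ P U + (1 - P U) := add_le_add_right h1 _
          _ = 1 := add_tsub_cancel_of_le prob_le_one
      exact ENNReal.le_sub_of_add_le_right
        (ne_top_of_le_ne_top one_ne_top (le_trans (le_add_left (le_refl _)) h3)) h3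
    calc ∫⁻ ω, g ω ∂P
        ≤ ∫⁻ ω, (N.indicator (fun _ => 1) ω + U.indicator (fun _ => β) ω) ∂P :=
          lintegral_mono hgle
      _ = (∫⁻ ω, N.indicator (fun _ => 1) ω ∂P) + ∫⁻ ω, U.indicator (fun _ => β) ω ∂P :=
          lintegral_add_left (measurable_const.indicator hNmeas) _
      _ = 1 * P N + β * P U := by
          rw [lintegral_indicator_const hNmeas, lintegral_indicator_const hUmeas]
      _ = β * P U := by rw [hN0, mul_zero, zero_add]
      _ ≤ β * (1 - er P hb) := mul_le_mul_right hPU β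
      _ = (1 - er P hb) * β := mul_comm _ _
  -- the fixed-point contradiction
  have hβle : β ≤ (1 - er P hb) * β :=
    iSup_le fun p => hkey p.1.1 p.1.2 p.2
  have hβ0 : β ≠ 0 := by
    intro h0'
    have hle : lam q0 P T (i0 + 0) s0 ≤ β :=
      le_iSup (fun p : {p : ℕ × (ℕ → X × Bool) // Reach i0 s0 C p.1 p.2} =>
        lam q0 P T (i0 + p.1.1) p.1.2) ⟨(0, s0), Reach.zero⟩
    rw [h0'] at hle
    exact absurd (lt_of_lt_of_le h0 hle) (lt_irrefl 0)
  have hεlt : 1 - er P hb < 1 := ENNReal.sub_lt_self one_ne_top one_ne_zero (ne_of_gt hber)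
  have hcontr : β < β := by
    calc β ≤ (1 - er P hb) * β := hβle
      _ < 1 * β := by
          exact ENNReal.mul_lt_mul_left hβ0 (ne_top_of_le_ne_top one_ne_top hβ1) hεlt
      _ = β := one_mul β
  exact lt_irrefl _ hcontr

end StepSec

section Iota

variable (q0 : X × Bool) (P : Measure (X × Bool)) [IsProbabilityMeasure P]
variable (H : Set (X → Bool))

noncomputable def iota (k : ℕ) : ℝ≥0∞ :=
  ⨆ (S : Set (ℕ → X × Bool)) (_ : (MeasurableSet (mset q0 k S) ∧ supp k S) ∧ S ⊆ Bhat P H k),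
    nu q0 P k S

lemma iota_le_one (k : ℕ) : iota q0 P H k ≤ 1 :=
  iSup_le fun S => iSup_le fun _ => prob_le_one

lemma nu_pos_nonempty {k : ℕ} {A : Set (ℕ → X × Bool)} (h : 0 < nu q0 P k A) :
    ∃ t : Fin k → X × Bool, rf q0 k t ∈ A := by
  by_contra hni
  push_neg at hni
  have hempty : mset q0 k A = ∅ := by
    ext t
    simp only [mset, Set.mem_setOf_eq, Set.mem_empty_iff_false, iff_false]
    exact hni t
  rw [nu, hempty, measure_empty] at h
  exact lt_irrefl _ h

lemma nu_le_iota {k : ℕ} {A : Set (ℕ → X × Bool)}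
    (h1 : MeasurableSet (mset q0 k A)) (h2 : supp k A) (h3 : A ⊆ Bhat P H k) :
    nu q0 P k A ≤ iota q0 P H k := by
  rw [iota]
  exact le_iSup_of_le A (le_iSup_of_le ⟨⟨h1, h2⟩, h3⟩ (le_refl _))

lemma tsum_eps : (∑' l : ℕ, (2⁻¹ : ℝ≥0∞) ^ (l + 3)) = 2⁻¹ * 2⁻¹ := by
  calc (∑' l : ℕ, (2⁻¹ : ℝ≥0∞) ^ (l + 3))
      = (∑' l : ℕ, (2⁻¹ : ℝ≥0∞) ^ l * 2⁻¹ ^ 3) := by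
        refine tsum_congr fun l => ?_
        rw [pow_add]
    _ = (∑' l : ℕ, (2⁻¹ : ℝ≥0∞) ^ l) * 2⁻¹ ^ 3 := ENNReal.tsum_mul_right
    _ = (1 - 2⁻¹)⁻¹ * 2⁻¹ ^ 3 := by rw [ENNReal.tsum_geometric]
    _ = 2 * 2⁻¹ ^ 3 := by rw [ENNReal.one_sub_inv_two, inv_inv]
    _ = (2 * 2⁻¹) * (2⁻¹ * 2⁻¹) := by ring
    _ = 2⁻¹ * 2⁻¹ := by
        rw [ENNReal.mul_inv_cancel two_ne_zero ENNReal.ofNat_ne_top, one_mul]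

lemma exists_iota_le (hstar : X → Bool)
    (hno : ¬ ∃ (x : ℕ → X) (y : ℕ → Bool),
      (∀ i : ℕ, hstar (x i) = y i) ∧
      (∀ n : ℕ, ∃ h ∈ H, ∀ i < n, h (x i) = y i) ∧
      (∀ k : ℕ, ∃ h ∈ H, (∀ i < k, h (x i) = y i) ∧ h (x k) ≠ y k))
    (hN : P {q : X × Bool | ¬ q.2 = hstar q.1} = 0) :
    ∃ k : ℕ, iota q0 P H k ≤ 2⁻¹ := by
  classical
  by_contra hcon
  push_neg at hcon
  -- choose near-optimal measurable subsets of the bad sets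
  have hchoose : ∀ k : ℕ, ∃ S : Set (ℕ → X × Bool),
      ((MeasurableSet (mset q0 k S) ∧ supp k S) ∧ S ⊆ Bhat P H k) ∧
      iota q0 P H k - (2⁻¹ : ℝ≥0∞) ^ (k + 3) < nu q0 P k S := by
    intro k
    have hlt : iota q0 P H k - (2⁻¹ : ℝ≥0∞) ^ (k + 3) < iota q0 P H k := by
      apply ENNReal.sub_lt_self
      · exact ne_top_of_le_ne_top one_ne_top (iota_le_one q0 P H k)
      · exact (lt_trans (by simp) (hcon k)).ne'
      · exact (ENNReal.pow_ne_zero (by simp) _)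
    rw [iota] at hlt
    obtain ⟨S, hS⟩ := lt_iSup_iff.mp hlt
    obtain ⟨hcond, hlt2⟩ := lt_iSup_iff.mp hS
    exact ⟨S, hcond, hlt2⟩
  choose S hSgood hSlt using hchoose
  -- intersections
  set T : ℕ → Set (ℕ → X × Bool) := fun k => ⋂ l, ⋂ (_ : l ≤ k), S l with hTdef
  have hTsub : ∀ k l, l ≤ k → T k ⊆ S l := by
    intro k l hl x hx
    rw [hTdef] at hx
    simp only [Set.mem_iInter] at hx
    exact hx l hl
  have hTs : ∀ k, supp k (T k) := by
    intro k x y hxy hx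
    rw [hTdef] at *
    simp only [Set.mem_iInter] at *
    intro l hl
    exact (hSgood l).1.2 x y (fun m hm => hxy m (by omega)) (hx l hl)
  have hTm : ∀ k, MeasurableSet (mset q0 k (T k)) := by
    intro k
    have hms : mset q0 k (T k) = ⋂ l, ⋂ (_ : l ≤ k), mset q0 k (S l) := by
      rw [hTdef]
      ext t
      simp only [mset, Set.mem_setOf_eq, Set.mem_iInter]
    rw [hms]
    exact MeasurableSet.iInter fun l => MeasurableSet.iInter fun hl =>
      measurableSet_mset_of_le q0 hl (hSgood l).1.2 (hSgood l).1.1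
  have hTd : ∀ k, T (k + 1) ⊆ T k := by
    intro k x hx
    rw [hTdef] at *
    simp only [Set.mem_iInter] at *
    exact fun l hl => hx l (by omega)
  have hTB : ∀ k, T k ⊆ Bhat P H k := fun k => le_trans (hTsub k k (le_refl k)) (hSgood k).2
  -- gap bound
  have hGAP : ∀ k l, l < k → nu q0 P k (S k \ S l) ≤ (2⁻¹ : ℝ≥0∞) ^ (l + 3) := by
    intro k l hlk
    have hsuppA : supp k (S k \ S l) := by
      intro x y hxy hx
      refine ⟨(hSgood k).1.2 x y hxy hx.1, fun hyS => ?_⟩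
      exact hx.2 ((hSgood l).1.2 y x (fun m hm => (hxy m (by omega)).symm) hyS)
    have hmA : MeasurableSet (mset q0 k (S k \ S l)) := by
      have hms : mset q0 k (S k \ S l) = mset q0 k (S k) \ mset q0 k (S l) := by
        ext t
        simp [mset]
      rw [hms]
      exact (hSgood k).1.1.diff
        (measurableSet_mset_of_le q0 (le_of_lt hlk) (hSgood l).1.2 (hSgood l).1.1)
    have hk : l + (k - l) = k := by omega
    have hsupp' : supp (l + (k - l)) (S k \ S l) := by rw [hk]; exact hsuppA
    have hm' : MeasurableSet (mset q0 (l + (k - l)) (S k \ S l)) := by rw [hk]; exact hmA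
    have hiter := nu_iter q0 P l hsupp' hm'
    set G : Set (Fin l → X × Bool) :=
      {u | 0 < nu q0 P (k - l) (fixP l (rf q0 l u) (S k \ S l))} with hGdef
    have hGmeas : MeasurableSet G :=
      measurableSet_lt measurable_const (measurable_nu_fix q0 P hm')
    set Gt : Set (ℕ → X × Bool) := {x | (fun m : Fin l => x m) ∈ G} with hGtdef
    have hmsetGt : mset q0 l Gt = G := by
      ext u
      show (fun m : Fin l => rf q0 l u m) ∈ G ↔ u ∈ G
      have hfun : (fun m : Fin l => rf q0 l u (m : ℕ)) = u := by
        funext m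
        rw [rf_lt q0 _ m.isLt]
      rw [hfun]
    have hsuppGt : supp l Gt := by
      intro x y hxy hx
      have hfun : (fun m : Fin l => y (m : ℕ)) = fun m : Fin l => x (m : ℕ) := by
        funext m
        exact (hxy m m.isLt).symm
      show (fun m : Fin l => y (m : ℕ)) ∈ G
      rw [hfun]
      exact hx
    -- each element of Gt lies in the bad set at stage l, and outside S l
    have hGtprop : ∀ x ∈ Gt, x ∈ Bhat P H l ∧ x ∉ S l := by
      intro x hx
      obtain ⟨t, ht⟩ := nu_pos_nonempty q0 P hx
      have hy : glue l (rf q0 l (fun m : Fin l => x (m : ℕ))) (rf q0 (k - l) t) ∈ S k \ S l := ht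
      have hagree : ∀ m < l,
          glue l (rf q0 l (fun m' : Fin l => x (m' : ℕ))) (rf q0 (k - l) t) m = x m := by
        intro m hm
        rw [glue_lt _ _ hm, rf_lt q0 _ hm]
      constructor
      · obtain ⟨h, hH, hcons, her⟩ := (hSgood k).2 hy.1
        refine ⟨h, hH, fun m hm => ?_, her⟩
        have := hcons m (by omega)
        rwa [hagree m hm] at this
      · intro hxS
        exact hy.2 ((hSgood l).1.2 x _ (fun m hm => (hagree m hm).symm) hxS)
    have hGtB : Gt ⊆ Bhat P H l := fun x hx => (hGtprop x hx).1
    have hUnion : nu q0 P l (S l ∪ Gt) ≤ iota q0 P H l := by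
      apply nu_le_iota
      · have hms : mset q0 l (S l ∪ Gt) = mset q0 l (S l) ∪ mset q0 l Gt := rfl
        rw [hms, hmsetGt]
        exact (hSgood l).1.1.union hGmeas
      · intro x y hxy hx
        rcases hx with hx | hx
        · exact Or.inl ((hSgood l).1.2 x y hxy hx)
        · exact Or.inr (hsuppGt x y hxy hx)
      · intro x hx
        rcases hx with hx | hx
        · exact (hSgood l).2 hx
        · exact hGtB hx
    have hsum : nu q0 P l (S l) + nu q0 P l Gt = nu q0 P l (S l ∪ Gt) := by
      rw [nu, nu, nu]
      rw [show mset q0 l (S l ∪ Gt) = mset q0 l (S l) ∪ mset q0 l Gt from rfl]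
      refine (measure_union ?_ (by rw [hmsetGt]; exact hGmeas)).symm
      rw [Set.disjoint_left]
      intro t ht1 ht2
      exact (hGtprop _ ht2).2 ht1
    have hεbound : nu q0 P l Gt ≤ (2⁻¹ : ℝ≥0∞) ^ (l + 3) := by
      have hεle : ((2⁻¹ : ℝ≥0∞) ^ (l + 3)) ≤ iota q0 P H l := by
        refine le_trans ?_ (le_of_lt (hcon l))
        calc ((2⁻¹ : ℝ≥0∞) ^ (l + 3)) = 2⁻¹ ^ (l + 2) * 2⁻¹ ^ 1 := by
              rw [← pow_add]
          _ ≤ 1 * 2⁻¹ ^ 1 := by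
              refine mul_le_mul_left ?_ _
              exact pow_le_one' (by simp) _
          _ = 2⁻¹ := by rw [one_mul, pow_one]
      have h1 : iota q0 P H l < nu q0 P l (S l) + (2⁻¹ : ℝ≥0∞) ^ (l + 3) := by
        have hx := hSlt l
        exact (ENNReal.sub_lt_iff_lt_right
          (by simp [ENNReal.pow_ne_top]) hεle).mp hx
      have h2 : nu q0 P l (S l) + nu q0 P l Gt ≤ iota q0 P H l := hsum ▸ hUnion
      have h3 : nu q0 P l (S l) + nu q0 P l Gt
          < nu q0 P l (S l) + (2⁻¹ : ℝ≥0∞) ^ (l + 3) := lt_of_le_of_lt h2 h1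
      exact le_of_lt ((ENNReal.add_lt_add_iff_left (measure_ne_top _ _)).mp h3)
    calc nu q0 P k (S k \ S l) = nu q0 P (l + (k - l)) (S k \ S l) := by rw [hk]
      _ = ∫⁻ u : Fin l → X × Bool,
            nu q0 P (k - l) (fixP l (rf q0 l u) (S k \ S l)) ∂pin P l := hiter
      _ ≤ ∫⁻ u, G.indicator (fun _ => 1) u ∂pin P l := by
          refine lintegral_mono fun u => ?_
          by_cases hu : u ∈ G
          · rw [Set.indicator_of_mem hu]
            exact prob_le_one
          · rw [Set.indicator_of_notMem hu]
            have : ¬ 0 < nu q0 P (k - l) (fixP l (rf q0 l u) (S k \ S l)) := hu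
            simp only [not_lt, le_zero_iff] at this
            rw [this]
      _ = 1 * pin P l G := lintegral_indicator_const hGmeas 1
      _ = nu q0 P l Gt := by rw [one_mul, nu, hmsetGt]
      _ ≤ (2⁻¹ : ℝ≥0∞) ^ (l + 3) := hεbound
  -- lower bound for the measure of T k
  have hTnu : ∀ k, (2⁻¹ * 2⁻¹ : ℝ≥0∞) ≤ nu q0 P k (T k) := by
    intro k
    have hcover : mset q0 k (S k) ⊆ mset q0 k (T k) ∪
        ⋃ l ∈ Finset.range k, mset q0 k (S k \ S l) := by
      intro t ht
      by_cases hT : rf q0 k t ∈ T k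
      · exact Or.inl hT
      · right
        rw [hTdef] at hT
        simp only [Set.mem_iInter, not_forall] at hT
        obtain ⟨l, hl, hnot⟩ := hT
        have hlk : l < k := by
          have hne : l ≠ k := fun he => hnot (he ▸ ht)
          omega
        simp only [Set.mem_iUnion]
        exact ⟨l, Finset.mem_range.mpr hlk, ⟨ht, hnot⟩⟩
    have hmeasbound : nu q0 P k (S k) ≤ nu q0 P k (T k) +
        ∑ l ∈ Finset.range k, nu q0 P k (S k \ S l) := by
      calc nu q0 P k (S k)
          ≤ pin P k (mset q0 k (T k) ∪ ⋃ l ∈ Finset.range k, mset q0 k (S k \ S l)) :=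
            measure_mono hcover
        _ ≤ pin P k (mset q0 k (T k)) +
              pin P k (⋃ l ∈ Finset.range k, mset q0 k (S k \ S l)) := measure_union_le _ _
        _ ≤ nu q0 P k (T k) + ∑ l ∈ Finset.range k, nu q0 P k (S k \ S l) := by
            refine add_le_add_right ?_ _
            exact measure_biUnion_finset_le _ _
    have hsumbound : ∑ l ∈ Finset.range k, nu q0 P k (S k \ S l) + (2⁻¹ : ℝ≥0∞) ^ (k + 3)
        ≤ 2⁻¹ * 2⁻¹ := by
      have hstep1 : ∑ l ∈ Finset.range k, nu q0 P k (S k \ S l)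
          ≤ ∑ l ∈ Finset.range k, (2⁻¹ : ℝ≥0∞) ^ (l + 3) :=
        Finset.sum_le_sum fun l hl => hGAP k l (Finset.mem_range.mp hl)
      calc ∑ l ∈ Finset.range k, nu q0 P k (S k \ S l) + (2⁻¹ : ℝ≥0∞) ^ (k + 3)
          ≤ ∑ l ∈ Finset.range k, (2⁻¹ : ℝ≥0∞) ^ (l + 3) + (2⁻¹ : ℝ≥0∞) ^ (k + 3) :=
            add_le_add_left hstep1 _
        _ = ∑ l ∈ Finset.range (k + 1), (2⁻¹ : ℝ≥0∞) ^ (l + 3) :=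
            (Finset.sum_range_succ _ k).symm
        _ ≤ ∑' l : ℕ, (2⁻¹ : ℝ≥0∞) ^ (l + 3) := ENNReal.sum_le_tsum _
        _ = 2⁻¹ * 2⁻¹ := tsum_eps
    have h1 : iota q0 P H k ≤ nu q0 P k (S k) + (2⁻¹ : ℝ≥0∞) ^ (k + 3) :=
      tsub_le_iff_right.mp (le_of_lt (hSlt k))
    have h2 : (2⁻¹ : ℝ≥0∞) < nu q0 P k (T k) + 2⁻¹ * 2⁻¹ := by
      calc (2⁻¹ : ℝ≥0∞) < iota q0 P H k := hcon k
        _ ≤ nu q0 P k (S k) + (2⁻¹ : ℝ≥0∞) ^ (k + 3) := h1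
        _ ≤ (nu q0 P k (T k) + ∑ l ∈ Finset.range k, nu q0 P k (S k \ S l))
              + (2⁻¹ : ℝ≥0∞) ^ (k + 3) := add_le_add_left hmeasbound _
        _ = nu q0 P k (T k) + (∑ l ∈ Finset.range k, nu q0 P k (S k \ S l)
              + (2⁻¹ : ℝ≥0∞) ^ (k + 3)) := by ring
        _ ≤ nu q0 P k (T k) + 2⁻¹ * 2⁻¹ := add_le_add_right hsumbound _
    by_contra hc
    push_neg at hc
    have h3 : nu q0 P k (T k) + (2⁻¹ * 2⁻¹ : ℝ≥0∞) < 2⁻¹ * 2⁻¹ + 2⁻¹ * 2⁻¹ :=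
      ENNReal.add_lt_add_right (by simp [ENNReal.mul_ne_top]) hc
    rw [show (2⁻¹ * 2⁻¹ : ℝ≥0∞) + 2⁻¹ * 2⁻¹ = (2⁻¹ + 2⁻¹) * 2⁻¹ from by ring,
      ENNReal.inv_two_add_inv_two, one_mul] at h3
    exact lt_irrefl _ (lt_trans h2 h3)
  -- base point
  have hbase : 0 < lam q0 P T 0 (fun _ => q0) := by
    have hlow : ∀ j, (2⁻¹ * 2⁻¹ : ℝ≥0∞) ≤ nu q0 P j (fixP 0 (fun _ => q0) (T (0 + j))) := by
      intro j
      rw [fixP_zero]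
      have hj : (0 : ℕ) + j = j := Nat.zero_add j
      rw [hj]
      exact hTnu j
    have hpos : (0 : ℝ≥0∞) < 2⁻¹ * 2⁻¹ :=
      ENNReal.mul_pos (by simp) (by simp)
    exact lt_of_lt_of_le hpos (le_iInf hlow)
  -- iterate the step lemma to produce an infinite eluder sequence
  have hstep : ∀ p : ℕ × (ℕ → X × Bool), 0 < lam q0 P T p.1 p.2 →
      ∃ q : ℕ × (ℕ → X × Bool), p.1 < q.1 ∧ (∀ m < p.1, q.2 m = p.2 m) ∧
        0 < lam q0 P T q.1 q.2 ∧
        (q.2 (q.1 - 1)).2 = hstar ((q.2 (q.1 - 1)).1) ∧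
        ∃ h ∈ H, (∀ m < q.1 - 1, h (q.2 m).1 = (q.2 m).2) ∧
          h (q.2 (q.1 - 1)).1 ≠ (q.2 (q.1 - 1)).2 := by
    intro p hp
    obtain ⟨i', s', h1, h2, h3, h4, h5⟩ :=
      step_lemma q0 P H hstar T hTm hTs hTd hTB hN p.1 p.2 hp
    exact ⟨(i', s'), h1, h2, h3, h4, h5⟩
  let F : {p : ℕ × (ℕ → X × Bool) // 0 < lam q0 P T p.1 p.2} →
      {p : ℕ × (ℕ → X × Bool) // 0 < lam q0 P T p.1 p.2} :=
    fun p => ⟨Classical.choose (hstep p.1 p.2), (Classical.choose_spec (hstep p.1 p.2)).2.2.1⟩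
  let ch : ℕ → {p : ℕ × (ℕ → X × Bool) // 0 < lam q0 P T p.1 p.2} :=
    fun n => F^[n] ⟨(0, fun _ => q0), hbase⟩
  have hch : ∀ n, ch (n + 1) = F (ch n) := fun n => Function.iterate_succ_apply' F n _
  have hspec : ∀ n, (ch n).1.1 < (ch (n + 1)).1.1 ∧
      (∀ m < (ch n).1.1, (ch (n + 1)).1.2 m = (ch n).1.2 m) ∧
      ((ch (n + 1)).1.2 ((ch (n + 1)).1.1 - 1)).2
        = hstar (((ch (n + 1)).1.2 ((ch (n + 1)).1.1 - 1)).1) ∧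
      ∃ h ∈ H, (∀ m < (ch (n + 1)).1.1 - 1, h ((ch (n + 1)).1.2 m).1 = ((ch (n + 1)).1.2 m).2) ∧
        h ((ch (n + 1)).1.2 ((ch (n + 1)).1.1 - 1)).1
          ≠ ((ch (n + 1)).1.2 ((ch (n + 1)).1.1 - 1)).2 := by
    intro n
    rw [hch n]
    have hsp := Classical.choose_spec (hstep (ch n).1 (ch n).2)
    exact ⟨hsp.1, hsp.2.1, hsp.2.2.2.1, hsp.2.2.2.2⟩
  have hmono : ∀ n m, n ≤ m → (ch n).1.1 ≤ (ch m).1.1 := by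
    intro n m h
    induction m, h using Nat.le_induction with
    | base => exact le_refl _
    | succ m hm ih => exact le_trans ih (le_of_lt (hspec m).1)
  have hstab : ∀ n m, n ≤ m → ∀ l < (ch n).1.1, (ch m).1.2 l = (ch n).1.2 l := by
    intro n m h
    induction m, h using Nat.le_induction with
    | base => exact fun l _ => rfl
    | succ m hm ih =>
      intro l hl
      rw [(hspec m).2.1 l (lt_of_lt_of_le hl (hmono n m hm))]
      exact ih l hl
  set z : ℕ → X × Bool := fun n => (ch (n + 1)).1.2 ((ch (n + 1)).1.1 - 1) with hzdef
  have hposz : ∀ t n, t < n →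
      (ch (t + 1)).1.1 - 1 < (ch n).1.1 ∧ (ch n).1.2 ((ch (t + 1)).1.1 - 1) = z t := by
    intro t n ht
    have h1 : (ch (t + 1)).1.1 ≤ (ch n).1.1 := hmono (t + 1) n (by omega)
    have h2 : (ch t).1.1 < (ch (t + 1)).1.1 := (hspec t).1
    refine ⟨by omega, ?_⟩
    exact hstab (t + 1) n (by omega) _ (by omega)
  refine hno ⟨fun n => (z n).1, fun n => (z n).2, ?_, ?_, ?_⟩
  · intro n
    exact ((hspec n).2.2.1).symm
  · intro n
    obtain ⟨h, hH, hcons, _⟩ := lam_pos_bad q0 P H T hTB (ch n).2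
    refine ⟨h, hH, fun t ht => ?_⟩
    show h (z t).1 = (z t).2
    have hp := hposz t n ht
    rw [← hp.2]
    exact hcons _ hp.1
  · intro n
    obtain ⟨h, hH, hcons, hwrong⟩ := (hspec n).2.2.2
    refine ⟨h, hH, fun t ht => ?_, hwrong⟩
    show h (z t).1 = (z t).2
    have hp := hposz t (n + 1) (by omega)
    rw [← hp.2]
    apply hcons
    have h1 := (hposz t n ht).1
    have h2 := (hspec n).1
    omega

end Iota

section Final

variable (q0 : X × Bool) (P : Measure (X × Bool)) [IsProbabilityMeasure P]
variable (H : Set (X → Bool))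

lemma inner_bound {k : ℕ} (hk : 0 < k) (hι : iota q0 P H k ≤ 2⁻¹) :
    ∀ n : ℕ, ∀ A : Set (ℕ → X × Bool), supp n A → MeasurableSet (mset q0 n A) →
      A ⊆ Bhat P H n → nu q0 P n A ≤ (2⁻¹ : ℝ≥0∞) ^ (n / k) := by
  intro n
  induction n using Nat.strong_induction_on with
  | _ n ih =>
    intro A hsupp hmeas hsub
    by_cases hnk : n < k
    · rw [Nat.div_eq_of_lt hnk, pow_zero]
      exact prob_le_one
    · push_neg at hnk
      have hkn : k + (n - k) = n := by omega
      have hs' : supp (k + (n - k)) A := by rw [hkn]; exact hsupp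
      have hm' : MeasurableSet (mset q0 (k + (n - k)) A) := by rw [hkn]; exact hmeas
      have hiter := nu_iter q0 P k hs' hm'
      set G : Set (Fin k → X × Bool) :=
        {u | 0 < nu q0 P (n - k) (fixP k (rf q0 k u) A)} with hGdef
      have hGmeas : MeasurableSet G :=
        measurableSet_lt measurable_const (measurable_nu_fix q0 P hm')
      set Gt : Set (ℕ → X × Bool) := {x | (fun m : Fin k => x (m : ℕ)) ∈ G} with hGtdef
      have hmsetGt : mset q0 k Gt = G := by
        ext u
        show (fun m : Fin k => rf q0 k u (m : ℕ)) ∈ G ↔ u ∈ G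
        have hfun : (fun m : Fin k => rf q0 k u (m : ℕ)) = u := by
          funext m
          rw [rf_lt q0 _ m.isLt]
        rw [hfun]
      have hsuppGt : supp k Gt := by
        intro x y hxy hx
        have hfun : (fun m : Fin k => y (m : ℕ)) = fun m : Fin k => x (m : ℕ) := by
          funext m
          exact (hxy m m.isLt).symm
        show (fun m : Fin k => y (m : ℕ)) ∈ G
        rw [hfun]
        exact hx
      have hGtB : Gt ⊆ Bhat P H k := by
        intro x hx
        obtain ⟨t, ht⟩ := nu_pos_nonempty q0 P hx
        have hy : glue k (rf q0 k (fun m : Fin k => x (m : ℕ))) (rf q0 (n - k) t) ∈ A := ht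
        have hagree : ∀ m < k,
            glue k (rf q0 k (fun m' : Fin k => x (m' : ℕ))) (rf q0 (n - k) t) m = x m := by
          intro m hm
          rw [glue_lt _ _ hm, rf_lt q0 _ hm]
        obtain ⟨h, hH, hcons, her⟩ := hsub hy
        refine ⟨h, hH, fun m hm => ?_, her⟩
        have h2 := hcons m (by omega)
        rwa [hagree m hm] at h2
      have hsec : ∀ u : Fin k → X × Bool,
          nu q0 P (n - k) (fixP k (rf q0 k u) A) ≤ (2⁻¹ : ℝ≥0∞) ^ ((n - k) / k) := by
        intro u
        refine ih (n - k) (by omega) _ (supp_fixP hs' _) (measurableSet_mset_fixP q0 hm' _) ?_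
        intro x hx
        obtain ⟨h, hH, hcons, her⟩ := hsub hx
        refine ⟨h, hH, fun m hm => ?_, her⟩
        have h2 := hcons (k + m) (by omega)
        rw [glue_ge _ _ (by omega)] at h2
        rw [show k + m - k = m from by omega] at h2
        exact h2
      have hG1 : pin P k G ≤ 2⁻¹ := by
        have hle : nu q0 P k Gt ≤ iota q0 P H k := by
          refine nu_le_iota q0 P H ?_ hsuppGt hGtB
          rw [hmsetGt]
          exact hGmeas
        calc pin P k G = nu q0 P k Gt := by rw [nu, hmsetGt]
          _ ≤ iota q0 P H k := hle
          _ ≤ 2⁻¹ := hι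
      calc nu q0 P n A = nu q0 P (k + (n - k)) A := by rw [hkn]
        _ = ∫⁻ u : Fin k → X × Bool,
              nu q0 P (n - k) (fixP k (rf q0 k u) A) ∂pin P k := hiter
        _ ≤ ∫⁻ u, G.indicator (fun _ => (2⁻¹ : ℝ≥0∞) ^ ((n - k) / k)) u ∂pin P k := by
            refine lintegral_mono fun u => ?_
            by_cases hu : u ∈ G
            · rw [Set.indicator_of_mem hu]
              exact hsec u
            · rw [Set.indicator_of_notMem hu]
              have hzero : ¬ 0 < nu q0 P (n - k) (fixP k (rf q0 k u) A) := hu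
              simp only [not_lt, le_zero_iff] at hzero
              rw [hzero]
        _ = (2⁻¹ : ℝ≥0∞) ^ ((n - k) / k) * pin P k G := lintegral_indicator_const hGmeas _
        _ ≤ (2⁻¹ : ℝ≥0∞) ^ ((n - k) / k) * 2⁻¹ := mul_le_mul_right hG1 _
        _ = (2⁻¹ : ℝ≥0∞) ^ (n / k) := by
            rw [← pow_succ]
            congr 1
            rw [Nat.div_eq_sub_div hk hnk]

end Final

end NoEluderAux

/-- If `H` has no infinite eluder sequence centered at `h*`, then for every
realizable distribution `P` centered at `h*` there is a finite `k = k(P) > 0` such that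
every ERM learner (bounded by the worst-case ERM, whose error is the supremum of errors
over the version space) satisfies `E[er_P(ĥ_n)] ≤ 2^{-⌊n/k⌋}` for all `n`: exponential
rate. -/
theorem no_eluder_exponential_rate {X : Type*} [MeasurableSpace X]
    (H : Set (X → Bool)) (hstar : X → Bool)
    (hno : ¬ ∃ (x : ℕ → X) (y : ℕ → Bool),
      (∀ i : ℕ, hstar (x i) = y i) ∧
      (∀ n : ℕ, ∃ h ∈ H, ∀ i < n, h (x i) = y i) ∧
      (∀ k : ℕ, ∃ h ∈ H, (∀ i < k, h (x i) = y i) ∧ h (x k) ≠ y k))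
    (P : Measure (X × Bool)) [IsProbabilityMeasure P]
    (hcent : ∀ᵐ q ∂P, q.2 = hstar q.1)
    (hrel : ∀ ε : ℝ, 0 < ε → ∃ h ∈ H, (P {q : X × Bool | h q.1 ≠ q.2}).toReal < ε) :
    ∃ k : ℕ, 0 < k ∧ ∀ n : ℕ,
      ∫⁻ s : Fin n → X × Bool,
          ⨆ h ∈ {g ∈ H | ∀ i : Fin n, g (s i).1 = (s i).2},
            P {q : X × Bool | h q.1 ≠ q.2}
          ∂(Measure.pi fun _ => P)
        ≤ ((2 : ℝ≥0∞)⁻¹) ^ (n / k) := by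
  classical
  open NoEluderAux in
  have hne : Nonempty (X × Bool) := by
    by_contra hempty
    rw [not_nonempty_iff] at hempty
    have h1 : P Set.univ = 1 := measure_univ
    rw [Set.univ_eq_empty_iff.mpr hempty, measure_empty] at h1
    exact one_ne_zero h1.symm
  obtain ⟨q0⟩ := hne
  have hN : P {q : X × Bool | ¬ q.2 = hstar q.1} = 0 := ae_iff.mp hcent
  by_cases hEx : ∃ h ∈ H, 0 < NoEluderAux.er P h
  · obtain ⟨k, hk⟩ := NoEluderAux.exists_iota_le q0 P H hstar hno hN
    have hkpos : 0 < k := by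
      by_contra hk0
      have hk0' : k = 0 := by omega
      subst hk0'
      have huniv : (1 : ℝ≥0∞) ≤ NoEluderAux.iota q0 P H 0 := by
        have hnu : NoEluderAux.nu q0 P 0 Set.univ = 1 := by
          rw [NoEluderAux.nu]
          rw [show NoEluderAux.mset q0 0 (Set.univ : Set (ℕ → X × Bool)) = Set.univ from rfl]
          exact measure_univ
        calc (1 : ℝ≥0∞) = NoEluderAux.nu q0 P 0 Set.univ := hnu.symm
          _ ≤ NoEluderAux.iota q0 P H 0 := by
              refine NoEluderAux.nu_le_iota q0 P H ?_ ?_ ?_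
              · exact MeasurableSet.univ
              · exact fun x y _ hx => hx
              · intro x _
                obtain ⟨h, hh, hpos⟩ := hEx
                exact ⟨h, hh, fun m hm => absurd hm (by omega), hpos⟩
      have h2 : (2⁻¹ : ℝ≥0∞) < 1 := ENNReal.inv_lt_one.mpr one_lt_two
      exact absurd (le_trans huniv hk) (not_le.mpr h2)
    refine ⟨k, hkpos, fun n => ?_⟩
    have hbound := NoEluderAux.inner_bound q0 P H hkpos hk n
    rw [MeasureTheory.lintegral_def]
    refine iSup_le fun φ => iSup_le fun hφ => ?_
    have hf1 : ∀ s : Fin n → X × Bool,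
        (⨆ h ∈ {g ∈ H | ∀ i : Fin n, g (s i).1 = (s i).2},
          P {q : X × Bool | h q.1 ≠ q.2}) ≤ 1 :=
      fun s => iSup_le fun h => iSup_le fun _ => prob_le_one
    set Sφ : Set (Fin n → X × Bool) := {v | φ v ≠ 0} with hSφdef
    have hSφmeas : MeasurableSet Sφ := by
      have : Sφ = ⇑φ ⁻¹' ({0}ᶜ) := by
        ext v
        simp [hSφdef]
      rw [this]
      exact φ.measurable (measurableSet_singleton 0).compl
    have hφle : ∀ v, φ v ≤ Sφ.indicator (fun _ => 1) v := by
      intro v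
      by_cases hv : φ v = 0
      · rw [hv]
        exact zero_le
      · have hvS : v ∈ Sφ := hv
        rw [Set.indicator_of_mem hvS]
        exact le_trans (hφ v) (hf1 v)
    have hφint : φ.lintegral (Measure.pi fun _ => P) ≤ (Measure.pi fun _ => P) Sφ := by
      rw [← MeasureTheory.SimpleFunc.lintegral_eq_lintegral]
      calc ∫⁻ v, φ v ∂(Measure.pi fun _ => P)
          ≤ ∫⁻ v, Sφ.indicator (fun _ => 1) v ∂(Measure.pi fun _ => P) := lintegral_mono hφle
        _ = 1 * (Measure.pi fun _ => P) Sφ := lintegral_indicator_const hSφmeas 1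
        _ = (Measure.pi fun _ => P) Sφ := one_mul _
    set Gt : Set (ℕ → X × Bool) := {x | (fun m : Fin n => x (m : ℕ)) ∈ Sφ} with hGtdef
    have hmsetGt : NoEluderAux.mset q0 n Gt = Sφ := by
      ext u
      show (fun m : Fin n => NoEluderAux.rf q0 n u (m : ℕ)) ∈ Sφ ↔ u ∈ Sφ
      have hfun : (fun m : Fin n => NoEluderAux.rf q0 n u (m : ℕ)) = u := by
        funext m
        rw [NoEluderAux.rf_lt q0 _ m.isLt]
      rw [hfun]
    have hGtsupp : NoEluderAux.supp n Gt := by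
      intro x y hxy hx
      have hfun : (fun m : Fin n => y (m : ℕ)) = fun m : Fin n => x (m : ℕ) := by
        funext m
        exact (hxy m m.isLt).symm
      show (fun m : Fin n => y (m : ℕ)) ∈ Sφ
      rw [hfun]
      exact hx
    have hGtmeas : MeasurableSet (NoEluderAux.mset q0 n Gt) := by
      rw [hmsetGt]
      exact hSφmeas
    have hGtB : Gt ⊆ NoEluderAux.Bhat P H n := by
      intro x hx
      set v : Fin n → X × Bool := fun m => x (m : ℕ) with hvdef
      have hv : φ v ≠ 0 := hx
      have hfv : (⨆ h ∈ {g ∈ H | ∀ i : Fin n, g (v i).1 = (v i).2},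
          P {q : X × Bool | h q.1 ≠ q.2}) ≠ 0 :=
        fun h0 => hv (le_antisymm (le_trans (hφ v) (le_of_eq h0)) (zero_le))
      have hex2 : ∃ h ∈ {g ∈ H | ∀ i : Fin n, g (v i).1 = (v i).2},
          0 < P {q : X × Bool | h q.1 ≠ q.2} := by
        by_contra hno2
        push_neg at hno2
        refine hfv (le_antisymm ?_ (zero_le))
        refine iSup_le fun h => iSup_le fun hh => ?_
        simpa using hno2 h hh
      obtain ⟨h, ⟨hhH, hhcons⟩, hher⟩ := hex2
      exact ⟨h, hhH, fun m hm => hhcons ⟨m, hm⟩, hher⟩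
    have hfinal : (Measure.pi fun _ => P) Sφ ≤ (2⁻¹ : ℝ≥0∞) ^ (n / k) := by
      have hb := hbound Gt hGtsupp hGtmeas hGtB
      rw [NoEluderAux.nu, hmsetGt] at hb
      exact hb
    exact le_trans hφint hfinal
  · refine ⟨1, one_pos, fun n => ?_⟩
    have hzero : ∀ s : Fin n → X × Bool,
        (⨆ h ∈ {g ∈ H | ∀ i : Fin n, g (s i).1 = (s i).2},
          P {q : X × Bool | h q.1 ≠ q.2}) = 0 := by
      intro s
      refine le_antisymm ?_ (zero_le)
      refine iSup_le fun h => iSup_le fun hh => ?_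
      push_neg at hEx
      have h0 := hEx h hh.1
      simpa [NoEluderAux.er] using h0
    calc ∫⁻ s : Fin n → X × Bool,
          ⨆ h ∈ {g ∈ H | ∀ i : Fin n, g (s i).1 = (s i).2},
            P {q : X × Bool | h q.1 ≠ q.2} ∂(Measure.pi fun _ => P)
        = ∫⁻ _ : Fin n → X × Bool, 0 ∂(Measure.pi fun _ => P) := lintegral_congr hzero
      _ = 0 := lintegral_zero
      _ ≤ _ := zero_le
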